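/- arXiv:2508.04376 — 2 statements merged into one kernel-verified Lean document; each statement's English description precedes it below -/
import Mathlib

section
/- Under the stated hypotheses, for every nonzero φ ∈ X′ the local spectral radius of the adjoint S′ at φ equals the spectral radius of S: limsup_{n→∞} ‖(S′)ⁿ φ‖^{1/n} = r(S), where r(S) = max{|z| : z ∈ σ(S)}. -/
open Filter Real Set


/-- The adjoint of `S` acting on the continuous dual: `(dualOp S φ) x = φ (S x)`. -/
noncomputable def dualOp {X : Type*} [NormedAddCommGroup X] [NormedSpace ℂ X]
    (S : X →L[ℂ] X) : (X →L[ℂ] ℂ) →L[ℂ] (X →L[ℂ] ℂ) :=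
  (ContinuousLinearMap.compL ℂ X X ℂ).flip S

lemma dualOp_apply {X : Type*} [NormedAddCommGroup X] [NormedSpace ℂ X]
    (S : X →L[ℂ] X) (φ : X →L[ℂ] ℂ) : dualOp S φ = φ.comp S := rfl

set_option synthInstance.maxHeartbeats 200000 in
lemma dualOp_pow_apply {X : Type*} [NormedAddCommGroup X] [NormedSpace ℂ X]
    (S : X →L[ℂ] X) (φ : X →L[ℂ] ℂ) (n : ℕ) :
    (dualOp S ^ n) φ = φ.comp (S ^ n) := by
  induction n with
  | zero => ext x; simp
  | succ n ih =>
      rw [pow_succ', ContinuousLinearMap.mul_apply, ih, dualOp_apply]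
      ext x
      simp [pow_succ]

lemma pow_eigen {X : Type*} [NormedAddCommGroup X] [NormedSpace ℂ X]
    (S : X →L[ℂ] X) (c : ℂ) (x : X) (h : S x = c • x) (n : ℕ) :
    (S ^ n) x = c ^ n • x := by
  induction n with
  | zero => simp
  | succ n ih =>
      rw [pow_succ', ContinuousLinearMap.mul_apply, ih, map_smul, h, smul_smul]; ring_nf

lemma tendsto_rpow_one_div_nat (c : ℝ) (hc : 0 < c) :
    Tendsto (fun n : ℕ => c ^ (1 / (n:ℝ))) atTop (nhds 1) := by
  have h2 : Tendsto (fun x : ℝ => c ^ x) (nhds 0) (nhds 1) := by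
    simpa using (Real.continuousAt_const_rpow (b := (0:ℝ)) hc.ne').tendsto
  exact h2.comp tendsto_one_div_atTop_nhds_zero_nat


/-- under the eigenvector-family hypotheses, for every nonzero `φ ∈ X′`
the local spectral radius of `S′` at `φ`, i.e. `limsup_n ‖(S′)ⁿ φ‖^{1/n}`, equals the
spectral radius `r(S) = max {|z| : z ∈ σ(S)}`. -/
theorem stmt_8 (X : Type*) [NormedAddCommGroup X] [NormedSpace ℂ X] [CompleteSpace X]
    (S : X →L[ℂ] X)
    (G : Set ℂ) (hG : IsOpen G) (hGne : G.Nonempty) (hGconn : IsConnected G)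
    (Φ : ℂ → ℂ) (hΦ : DifferentiableOn ℂ Φ G) (hΦnc : ∃ a ∈ G, ∃ b ∈ G, Φ a ≠ Φ b)
    (f : ℂ → X) (hf : DifferentiableOn ℂ f G)
    (hfne : ∀ w ∈ G, f w ≠ 0) (heig : ∀ w ∈ G, S (f w) = Φ w • f w)
    (hdense : Dense (Submodule.span ℂ (f '' G) : Set X))
    (hspec : spectrum ℂ S ⊆ closure (Φ '' G))
    (φ : X →L[ℂ] ℂ) (hφ : φ ≠ 0) :
    Filter.limsup (fun n : ℕ => ‖(dualOp S ^ n) φ‖ ^ (1 / (n : ℝ))) Filter.atTop =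
      sSup ((fun z : ℂ => ‖z‖) '' spectrum ℂ S) := by
  obtain ⟨a, ha, -⟩ := hΦnc
  haveI : Nontrivial X := ⟨f a, 0, hfne a ha⟩
  set u : ℕ → ℝ := fun n => ‖(dualOp S ^ n) φ‖ ^ (1 / (n : ℝ)) with hu
  have hφpos : 0 < ‖φ‖ := norm_pos_iff.mpr hφ
  -- each Φ w is an eigenvalue, hence in the spectrum
  have hΦmem : ∀ w ∈ G, Φ w ∈ spectrum ℂ S := by
    intro w hw
    rw [spectrum.mem_iff]
    intro hU
    apply hfne w hw
    have h0 : (algebraMap ℂ (X →L[ℂ] X) (Φ w) - S) (f w) = 0 := by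
      simp [ContinuousLinearMap.sub_apply, heig w hw, Algebra.algebraMap_eq_smul_one]
    have key := hU.unit.inv_mul
    rw [hU.unit_spec] at key
    have h2 := congrArg (fun T : X →L[ℂ] X => T (f w)) key
    simp only [ContinuousLinearMap.mul_apply, ContinuousLinearMap.one_apply] at h2
    rw [h0, map_zero] at h2
    exact h2.symm
  have hσne : (spectrum ℂ S).Nonempty := ⟨Φ a, hΦmem a ha⟩
  have hbdd : BddAbove ((fun z : ℂ => ‖z‖) '' spectrum ℂ S) := by
    refine ⟨‖S‖, ?_⟩
    rintro _ ⟨z, hz, rfl⟩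
    simpa using spectrum.norm_le_norm_of_mem hz
  set r := sSup ((fun z : ℂ => ‖z‖) '' spectrum ℂ S) with hr
  have h0r : 0 ≤ r := le_trans (norm_nonneg _)
    (le_csSup hbdd ⟨Φ a, hΦmem a ha, rfl⟩)
  -- Gelfand formula, real version
  have hρfin : spectralRadius ℂ S ≠ ⊤ :=
    ((spectrum.spectralRadius_le_nnnorm S).trans_lt ENNReal.coe_lt_top).ne
  set ρ : ℝ := (spectralRadius ℂ S).toReal with hρ
  have hgelR : Filter.Tendsto (fun n : ℕ => ‖S ^ n‖ ^ (1/(n:ℝ))) atTop (nhds ρ) := by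
    have h := (ENNReal.tendsto_toReal hρfin).comp
      (spectrum.pow_nnnorm_pow_one_div_tendsto_nhds_spectralRadius S)
    convert h using 2 with n
    rw [Function.comp_apply, ← ENNReal.toReal_rpow]
    simp
  -- upper bound : limsup u ≤ ρ
  have hub : ∀ n : ℕ, u n ≤ ‖φ‖ ^ (1/(n:ℝ)) * ‖S ^ n‖ ^ (1/(n:ℝ)) := by
    intro n
    rw [← Real.mul_rpow (norm_nonneg _) (norm_nonneg _)]
    refine Real.rpow_le_rpow (norm_nonneg _) ?_ (by positivity)
    rw [dualOp_pow_apply]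
    exact ContinuousLinearMap.opNorm_comp_le _ _
  have hvten : Filter.Tendsto (fun n : ℕ => ‖φ‖ ^ (1/(n:ℝ)) * ‖S ^ n‖ ^ (1/(n:ℝ)))
      atTop (nhds ρ) := by
    simpa using (tendsto_rpow_one_div_nat ‖φ‖ hφpos).mul hgelR
  have hucob : Filter.IsCoboundedUnder (· ≤ ·) atTop u :=
    Filter.isCoboundedUnder_le_of_le atTop (fun n => by positivity)
  have hubdd : Filter.IsBoundedUnder (· ≤ ·) atTop u := by
    obtain ⟨b, hb⟩ := hvten.isBoundedUnder_le
    refine ⟨b, ?_⟩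
    rw [Filter.eventually_map] at hb ⊢
    exact hb.mono fun n hn => (hub n).trans hn
  have hlimsup_le : Filter.limsup u atTop ≤ ρ := by
    have := Filter.limsup_le_limsup (Filter.Eventually.of_forall hub) hucob
      hvten.isBoundedUnder_le
    rwa [hvten.limsup_eq] at this
  -- ρ ≤ r
  have hρler : ρ ≤ r := by
    have hle : spectralRadius ℂ S ≤ ENNReal.ofReal r := by
      rw [spectralRadius]
      refine iSup₂_le fun z hz => ?_
      rw [← enorm_eq_nnnorm, ← ofReal_norm]
      refine ENNReal.ofReal_le_ofReal ?_
      simpa using le_csSup hbdd ⟨z, hz, rfl⟩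
    calc ρ ≤ (ENNReal.ofReal r).toReal := ENNReal.toReal_mono ENNReal.ofReal_ne_top hle
      _ = r := ENNReal.toReal_ofReal h0r
  -- lower bound pieces
  -- for w ∈ G with φ (f w) ≠ 0 we have |Φ w| ≤ limsup u
  have hkey : ∀ w ∈ G, φ (f w) ≠ 0 → ‖Φ w‖ ≤ Filter.limsup u atTop := by
    intro w hw hφfw
    set c : ℝ := ‖φ (f w)‖ / ‖f w‖ with hc
    have hcpos : 0 < c := div_pos (norm_pos_iff.mpr hφfw) (norm_pos_iff.mpr (hfne w hw))
    have hlow : ∀ n : ℕ, 1 ≤ n → ‖Φ w‖ * c ^ (1/(n:ℝ)) ≤ u n := by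
      intro n hn
      have hnorm : ‖Φ w‖ ^ n * c ≤ ‖(dualOp S ^ n) φ‖ := by
        rw [hc, ← mul_div_assoc, div_le_iff₀ (norm_pos_iff.mpr (hfne w hw))]
        have happ : ((dualOp S ^ n) φ) (f w) = Φ w ^ n * φ (f w) := by
          rw [dualOp_pow_apply]
          simp [ContinuousLinearMap.comp_apply, pow_eigen S (Φ w) (f w) (heig w hw) n]
        calc ‖Φ w‖ ^ n * ‖φ (f w)‖ = ‖((dualOp S ^ n) φ) (f w)‖ := by
              set_option synthInstance.maxHeartbeats 200000 in
              rw [happ, norm_mul, norm_pow]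
          _ ≤ ‖(dualOp S ^ n) φ‖ * ‖f w‖ := ((dualOp S ^ n) φ).le_opNorm (f w)
      have h1 : (‖Φ w‖ ^ n * c) ^ (1/(n:ℝ)) ≤ u n :=
        Real.rpow_le_rpow (by positivity) hnorm (by positivity)
      calc ‖Φ w‖ * c ^ (1/(n:ℝ))
          = (‖Φ w‖ ^ n) ^ (1/(n:ℝ)) * c ^ (1/(n:ℝ)) := by
            rw [← Real.rpow_natCast (‖Φ w‖) n,
              ← Real.rpow_mul (norm_nonneg _)]
            rw [mul_one_div, div_self (by exact_mod_cast Nat.one_le_iff_ne_zero.mp hn), Real.rpow_one]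
        _ = (‖Φ w‖ ^ n * c) ^ (1/(n:ℝ)) := by
            rw [Real.mul_rpow (by positivity) hcpos.le]
        _ ≤ u n := h1
    have hvten' : Filter.Tendsto (fun n : ℕ => ‖Φ w‖ * c ^ (1/(n:ℝ)))
        atTop (nhds (‖Φ w‖)) := by
      simpa using (tendsto_const_nhds (x := ‖Φ w‖)).mul
        (tendsto_rpow_one_div_nat c hcpos)
    have := Filter.limsup_le_limsup
      (Filter.eventually_atTop.mpr ⟨1, hlow⟩) hvten'.isCoboundedUnder_le hubdd
    rwa [hvten'.limsup_eq] at this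
  -- the set of good w is locally dense, giving r ≤ limsup u
  have hglimsup : r ≤ Filter.limsup u atTop := by
    refine csSup_le ⟨_, mem_image_of_mem _ (hΦmem a ha)⟩ ?_
    rintro _ ⟨z, hz, rfl⟩
    refine le_of_forall_pos_le_add fun ε hε => ?_
    -- find w0 ∈ G with |Φ w0 - z| < ε
    obtain ⟨y, hy, hyz⟩ := Metric.mem_closure_iff.mp (hspec hz) ε hε
    obtain ⟨w0, hw0, rfl⟩ := hy
    -- frequently near w0, φ (f w) ≠ 0
    have hfreq : ∃ᶠ w in nhds w0, φ (f w) ≠ 0 := by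
      by_contra hcon
      rw [Filter.not_frequently] at hcon
      have hanal : AnalyticOnNhd ℂ (fun w => φ (f w)) G := by
        have h3 := (φ.differentiable.comp_differentiableOn hf).analyticOnNhd hG
        exact h3
      have heq0 : Set.EqOn (fun w => φ (f w)) 0 G := by
        refine hanal.eqOn_zero_of_preconnected_of_eventuallyEq_zero
          hGconn.isPreconnected hw0 ?_
        filter_upwards [hcon] with w hw
        simpa using not_not.mp hw
      apply hφ
      refine ContinuousLinearMap.ext_on hdense ?_
      rintro _ ⟨w, hw, rfl⟩
      simpa using heq0 hw
    -- eventually near w0, w ∈ G and |Φ w| > |z| - ε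
    have hcontΦ : ContinuousAt Φ w0 :=
      (hΦ.continuousOn.continuousWithinAt (hw0)).continuousAt (hG.mem_nhds hw0)
    have hcabs : ContinuousAt (fun w => ‖Φ w‖) w0 :=
      continuous_norm.continuousAt.comp hcontΦ
    have hgt : ‖z‖ - ε < ‖Φ w0‖ := by
      have h1 : ‖z‖ - ‖Φ w0‖ ≤ ‖z - Φ w0‖ := by
        simpa using norm_sub_norm_le z (Φ w0)
      rw [Complex.dist_eq] at hyz
      linarith
    have hGev : ∀ᶠ w in nhds w0, w ∈ G := hG.eventually_mem hw0
    have h2ev : ∀ᶠ w in nhds w0, ‖z‖ - ε < ‖Φ w‖ :=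
      hcabs (Ioi_mem_nhds hgt)
    have hev : ∀ᶠ w in nhds w0, w ∈ G ∧ ‖z‖ - ε < ‖Φ w‖ :=
      hGev.and h2ev
    obtain ⟨w, ⟨hwG, hwgt⟩, hwne⟩ := (hev.and_frequently hfreq).exists
    have := hkey w hwG hwne
    linarith
  exact le_antisymm (hlimsup_le.trans hρler) hglimsup
end

section
/- For every nonempty relatively open subset U of the closed disc {z ∈ ℂ : |z − 1| ≤ 1}, the glocal spectral subspace 𝔛_{C*}(Ū) of the adjoint Cesàro operator C* on ℓ²(ℕ, ℂ) is dense in ℓ², where Ū denotes the closure of U. -/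
/-- `C` is the Cesàro operator on `ℓ²(ℕ, ℂ)`: `(C a)ₙ = (1/(n+1)) ∑_{k=0}^{n} a_k`. -/
def IsCesaro (C : lp (fun _ : ℕ => ℂ) 2 →L[ℂ] lp (fun _ : ℕ => ℂ) 2) : Prop :=
  ∀ (a : lp (fun _ : ℕ => ℂ) 2) (n : ℕ),
    C a n = (∑ k ∈ Finset.range (n + 1), a k) / (n + 1)

/-- The glocal spectral subspace `𝔛_T(F)`: all `y` admitting an analytic solution
`g : ℂ ∖ F → X` of `(T - z) g z = y`. -/
def glocalSubspace {X : Type*} [NormedAddCommGroup X] [NormedSpace ℂ X]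
    (T : X →L[ℂ] X) (F : Set ℂ) : Set X :=
  {y | ∃ g : ℂ → X, DifferentiableOn ℂ g Fᶜ ∧ ∀ z ∈ Fᶜ, T (g z) - z • g z = y}

open Complex Finset Metric
open scoped ENNReal Topology ComplexConjugate

noncomputable def bseq (l : ℂ) (n : ℕ) : ℂ :=
  ∏ k ∈ Finset.range n, (1 - 1 / (l * (k + 1)))

lemma bseq_succ (l : ℂ) (n : ℕ) :
    bseq l (n + 1) = bseq l n * (1 - 1 / (l * (n + 1))) := Finset.prod_range_succ _ _

lemma sum_inv_sq_le (n : ℕ) :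
    ∑ k ∈ Finset.range n, (1 / ((k : ℝ) + 1)) ^ 2 ≤ (2:ℝ) := by
  have h : ∀ n : ℕ, ∑ k ∈ Finset.range n, (1 / ((k : ℝ) + 1)) ^ 2 ≤ 2 - 2 / ((n:ℝ) + 1) := by
    intro n
    induction n with
    | zero => simp
    | succ n ih =>
      rw [Finset.sum_range_succ]
      have h1 : (0:ℝ) < (n:ℝ) + 1 := by positivity
      have h2 : (0:ℝ) < (n:ℝ) + 2 := by positivity
      have key : (1 / ((n:ℝ) + 1)) ^ 2 ≤ 2 / ((n:ℝ) + 1) - 2 / ((n:ℝ) + 1 + 1) := by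
        rw [div_sub_div _ _ (ne_of_gt h1) (by positivity : ((n:ℝ)+1+1) ≠ 0), div_pow, one_pow]
        rw [div_le_div_iff₀ (by positivity) (by positivity)]
        nlinarith
      push_cast
      linarith
  have h2 : (0:ℝ) < 2 / ((n:ℝ)+1) := by positivity
  linarith [h n]

lemma log_le_sum_inv (n : ℕ) :
    Real.log ((n:ℝ) + 1) ≤ ∑ k ∈ Finset.range n, 1 / ((k : ℝ) + 1) := by
  have h := log_add_one_le_harmonic n
  have hh : ((harmonic n : ℚ) : ℝ) = ∑ k ∈ Finset.range n, 1 / ((k : ℝ) + 1) := by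
    rw [harmonic]
    push_cast
    simp [one_div]
  push_cast at h
  linarith [hh.le]

lemma factor_abs_le {l : ℂ} {σ M : ℝ} (hσ : 0 < σ)
    (h1 : σ ≤ (l⁻¹).re) (h2 : ‖l⁻¹‖ ≤ M) (k : ℕ) :
    ‖1 - 1 / (l * (k + 1))‖ ≤
      Real.exp (-σ / ((k:ℝ) + 1) + M ^ 2 * (1 / ((k:ℝ) + 1)) ^ 2) := by
  set c : ℝ := ((k:ℝ) + 1) with hc
  have hc0 : (0:ℝ) < c := by positivity
  have hw : 1 / (l * (k + 1)) = l⁻¹ * ((1/c : ℝ) : ℂ) := by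
    rw [hc]; push_cast; rw [one_div, mul_inv, one_div]
  set w : ℂ := 1 / (l * (k + 1)) with hwdef
  have hwre : w.re = (l⁻¹).re * (1/c) := by
    rw [hw, Complex.mul_re]; simp
  have hwabs : ‖w‖ ≤ M * (1/c) := by
    rw [hw, norm_mul]
    have : ‖((1/c : ℝ):ℂ)‖ = 1/c := by
      rw [Complex.norm_real, Real.norm_eq_abs, abs_of_pos (by positivity)]
    rw [this]
    exact mul_le_mul_of_nonneg_right h2 (by positivity)
  have hsq : ‖1 - w‖ ^ 2 = 1 - 2 * w.re + ‖w‖ ^ 2 := by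
    rw [← Complex.normSq_eq_norm_sq, ← Complex.normSq_eq_norm_sq, Complex.normSq_sub]
    simp [Complex.normSq_eq_norm_sq]
    ring
  have key : ‖1 - w‖ ^ 2 ≤ Real.exp (2 * (-σ / c + M ^ 2 * (1/c) ^ 2)) := by
    have e1 : ‖1 - w‖ ^ 2 ≤ 1 + (-2*σ/c + M^2 * (1/c)^2) := by
      rw [hsq]
      have hb : ‖w‖ ^ 2 ≤ M^2 * (1/c)^2 := by
        have := pow_le_pow_left₀ (norm_nonneg _) hwabs 2
        rwa [mul_pow] at this
      have h3 : σ * (1/c) ≤ w.re := by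
        rw [hwre]; exact mul_le_mul_of_nonneg_right h1 (by positivity)
      have h4 : -2*σ/c = -2*(σ*(1/c)) := by ring
      linarith
    calc ‖1 - w‖ ^ 2 ≤ 1 + (-2*σ/c + M^2 * (1/c)^2) := e1
      _ ≤ Real.exp (-2*σ/c + M^2*(1/c)^2) := by
          rw [add_comm]; exact Real.add_one_le_exp _
      _ ≤ Real.exp (2 * (-σ / c + M ^ 2 * (1/c) ^ 2)) := by
          apply Real.exp_le_exp.2
          have e : 2*(-σ/c) = -2*σ/c := by ring
          have hM2 : (0:ℝ) ≤ M^2 * (1/c)^2 := by positivity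
          linarith
  have habs : (0:ℝ) ≤ ‖1 - w‖ := norm_nonneg _
  have h5 := Real.sqrt_le_sqrt key
  rw [Real.sqrt_sq habs] at h5
  have e2 : Real.exp (2 * (-σ / c + M ^ 2 * (1/c) ^ 2))
      = Real.exp (-σ / c + M ^ 2 * (1/c) ^ 2) ^ 2 := by
    rw [two_mul, Real.exp_add, sq]; ring
  rw [e2, Real.sqrt_sq (Real.exp_nonneg _)] at h5
  exact h5

lemma bseq_abs_le {l : ℂ} {σ M : ℝ} (hσ : 0 < σ)
    (h1 : σ ≤ (l⁻¹).re) (h2 : ‖l⁻¹‖ ≤ M) (n : ℕ) :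
    ‖bseq l n‖ ≤ Real.exp (2 * M ^ 2) * ((n:ℝ) + 1) ^ (-σ) := by
  have habs : ‖bseq l n‖ = ∏ k ∈ Finset.range n, ‖1 - 1/(l*(k+1))‖ :=
    norm_prod _ _
  have h3 : ‖bseq l n‖ ≤
      ∏ k ∈ Finset.range n, Real.exp (-σ / ((k:ℝ)+1) + M^2 * (1/((k:ℝ)+1))^2) := by
    rw [habs]
    exact Finset.prod_le_prod (fun k _ => norm_nonneg _)
      (fun k _ => factor_abs_le hσ h1 h2 k)
  rw [← Real.exp_sum] at h3
  have h4 : ∑ k ∈ Finset.range n, (-σ / ((k:ℝ)+1) + M^2 * (1/((k:ℝ)+1))^2)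
      ≤ -σ * Real.log ((n:ℝ)+1) + 2 * M^2 := by
    rw [Finset.sum_add_distrib]
    have ha : ∑ k ∈ Finset.range n, -σ / ((k:ℝ)+1) ≤ -σ * Real.log ((n:ℝ)+1) := by
      have : ∑ k ∈ Finset.range n, -σ / ((k:ℝ)+1)
          = -σ * ∑ k ∈ Finset.range n, 1/((k:ℝ)+1) := by
        rw [Finset.mul_sum]; exact Finset.sum_congr rfl fun k _ => by ring
      rw [this]
      have := log_le_sum_inv n
      nlinarith [this]
    have hb : ∑ k ∈ Finset.range n, M^2 * (1/((k:ℝ)+1))^2 ≤ 2 * M^2 := by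
      rw [← Finset.mul_sum]
      have := sum_inv_sq_le n
      nlinarith [sq_nonneg M]
    linarith
  have h5 := (Real.exp_le_exp.2 h4)
  have h6 : Real.exp (-σ * Real.log ((n:ℝ)+1) + 2*M^2)
      = Real.exp (2 * M^2) * ((n:ℝ)+1) ^ (-σ) := by
    rw [Real.exp_add, Real.rpow_def_of_pos (by positivity)]
    rw [mul_comm (Real.log _) _]
    ring
  linarith [h3.trans h5, h6.le]

lemma disc_bounds {l : ℂ} {t : ℝ} (ht : 0 < t) (ht1 : t ≤ 1)
    (hl : ‖l - 1‖ ≤ 1 - t) :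
    l ≠ 0 ∧ ‖l⁻¹‖ ≤ 1/t ∧ 1/2 + t/8 ≤ (l⁻¹).re := by
  have habs : t ≤ ‖l‖ := by
    have h := norm_sub_norm_le (1:ℂ) (1 - l)
    simp only [norm_one, sub_sub_cancel] at h
    rw [show (1:ℂ) - l = -(l - 1) by ring, norm_neg] at h
    linarith
  have hl0 : l ≠ 0 := by
    intro h; rw [h] at habs; simp at habs; linarith
  refine ⟨hl0, ?_, ?_⟩
  · rw [norm_inv, one_div]
    exact inv_anti₀ ht habs
  · have hN0 : 0 < Complex.normSq l := Complex.normSq_pos.2 hl0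
    have hN4 : Complex.normSq l ≤ 4 := by
      have h2 : ‖l‖ ≤ 2 := by
        have h := norm_sub_norm_le l (l - 1)
        simp only [sub_sub_cancel] at h
        have : ‖l‖ - ‖l-1‖ ≤ 1 := by
          simpa using h
        linarith
      rw [← Complex.sq_norm]
      nlinarith [norm_nonneg l]
    have hre : Complex.normSq l + 2*t - t^2 ≤ 2 * l.re := by
      have e : Complex.normSq (l - 1) = Complex.normSq l - 2 * l.re + 1 := by
        rw [Complex.normSq_sub]
        simp
        ring
      have hb : Complex.normSq (l - 1) ≤ (1 - t)^2 := by
        rw [← Complex.sq_norm]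
        exact pow_le_pow_left₀ (norm_nonneg _) hl 2
      nlinarith
    rw [Complex.inv_re, le_div_iff₀ hN0]
    nlinarith

lemma summable_rpow_shift {p : ℝ} (hp : 1 < p) :
    Summable (fun n : ℕ => ((n:ℝ) + 1) ^ (-p)) := by
  have h : Summable (fun n : ℕ => (n:ℝ) ^ (-p)) :=
    Real.summable_nat_rpow.2 (by linarith)
  have h2 := (summable_nat_add_iff 1).2 h
  refine h2.congr fun n => ?_
  push_cast
  norm_num

lemma abs_pow_two_le {l : ℂ} {σ M : ℝ} (hσ : 0 < σ)
    (h1 : σ ≤ (l⁻¹).re) (h2 : ‖l⁻¹‖ ≤ M) (n : ℕ) :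
    ‖bseq l n‖ ^ (2:ℝ) ≤
      (Real.exp (2 * M ^ 2)) ^ 2 * ((n:ℝ) + 1) ^ (-(2*σ)) := by
  have hb := bseq_abs_le hσ h1 h2 n
  have hnn : (0:ℝ) ≤ ((n:ℝ)+1) ^ (-σ) := Real.rpow_nonneg (by positivity) _
  have e : ‖bseq l n‖ ^ (2:ℝ) = ‖bseq l n‖ ^ (2:ℕ) := by
    rw [show (2:ℝ) = ((2:ℕ):ℝ) by norm_num, Real.rpow_natCast]
  rw [e]
  calc ‖bseq l n‖ ^ (2:ℕ)
      ≤ (Real.exp (2 * M ^ 2) * ((n:ℝ) + 1) ^ (-σ)) ^ (2:ℕ) :=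
        pow_le_pow_left₀ (norm_nonneg _) hb 2
    _ = (Real.exp (2 * M ^ 2)) ^ 2 * ((n:ℝ) + 1) ^ (-(2*σ)) := by
        rw [mul_pow]
        congr 1
        rw [← Real.rpow_natCast (((n:ℝ)+1) ^ (-σ)) 2, ← Real.rpow_mul (by positivity)]
        norm_num
        ring_nf

lemma bseq_memℓp {l : ℂ} {σ M : ℝ} (hσ : 1/2 < σ)
    (h1 : σ ≤ (l⁻¹).re) (h2 : ‖l⁻¹‖ ≤ M) :
    Memℓp (bseq l) 2 := by
  apply memℓp_gen
  have ht : (2:ℝ≥0∞).toReal = (2:ℝ) := by norm_num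
  rw [ht]
  apply Summable.of_nonneg_of_le (fun n => by positivity)
    (fun n => ?_) ((summable_rpow_shift (by linarith : (1:ℝ) < 2*σ)).mul_left
      ((Real.exp (2 * M ^ 2)) ^ 2))
  have := abs_pow_two_le (by linarith : 0 < σ) h1 h2 n
  calc ‖bseq l n‖ ^ (2:ℝ) = ‖bseq l n‖ ^ (2:ℝ) := by
        rfl
    _ ≤ _ := this

open Filter in
lemma bseq_tendsto_zero {l : ℂ} {σ M : ℝ} (hσ : 0 < σ)
    (h1 : σ ≤ (l⁻¹).re) (h2 : ‖l⁻¹‖ ≤ M) :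
    Tendsto (fun n => bseq l n) atTop (𝓝 0) := by
  refine squeeze_zero_norm (fun n => ?_) (a := fun n : ℕ => Real.exp (2*M^2) * ((n:ℝ)+1) ^ (-σ)) ?_
  · exact bseq_abs_le hσ h1 h2 n
  · have h3 : Tendsto (fun x : ℝ => x ^ (-σ)) atTop (𝓝 0) := tendsto_rpow_neg_atTop hσ
    have h4 : Tendsto (fun n : ℕ => (n:ℝ) + 1) atTop atTop :=
      tendsto_atTop_add_const_right _ 1 tendsto_natCast_atTop_atTop
    have := (h3.comp h4).const_mul (Real.exp (2*M^2))
    simpa using this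

lemma bseq_div {l : ℂ} (hl : l ≠ 0) (m : ℕ) :
    bseq l m / ((m:ℂ) + 1) = l * (bseq l m - bseq l (m+1)) := by
  rw [bseq_succ]
  have hm : ((m:ℂ) + 1) ≠ 0 := by
    have := Nat.cast_add_one_ne_zero (R := ℂ) m
    push_cast at this ⊢; exact this
  field_simp
  ring

lemma if_div_summable {l : ℂ} {σ M : ℝ} (hσ : 1/2 < σ)
    (h1 : σ ≤ (l⁻¹).re) (h2 : ‖l⁻¹‖ ≤ M) (k : ℕ) :
    Summable (fun n : ℕ => if k ≤ n then bseq l n / ((n:ℂ)+1) else 0) := by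
  apply Summable.of_norm
  apply Summable.of_nonneg_of_le (fun n => norm_nonneg _)
    (fun n => ?_) ((summable_rpow_shift (by linarith : (1:ℝ) < σ + 1)).mul_left
      (Real.exp (2*M^2)))
  by_cases hk : k ≤ n
  · rw [if_pos hk, norm_div]
    have hden : ‖((n:ℂ)+1)‖ = (n:ℝ)+1 := by
      rw [show ((n:ℂ)+1) = ((n+1:ℕ):ℂ) by push_cast; ring]
      rw [Complex.norm_natCast]
      push_cast; ring
    rw [hden]
    have hb := bseq_abs_le (by linarith : 0 < σ) h1 h2 n
    have hpos : (0:ℝ) < (n:ℝ)+1 := by positivity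
    have e : Real.exp (2*M^2) * ((n:ℝ)+1) ^ (-(σ+1))
        = (Real.exp (2*M^2) * ((n:ℝ)+1) ^ (-σ)) / ((n:ℝ)+1) := by
      rw [show -(σ+1) = -σ + (-1) by ring, Real.rpow_add hpos, Real.rpow_neg_one]
      field_simp
    rw [e]
    gcongr
  · rw [if_neg hk]
    simp only [norm_zero]
    positivity

open Filter in
lemma bseq_tail {l : ℂ} {σ M : ℝ} (hσ : 1/2 < σ)
    (h1 : σ ≤ (l⁻¹).re) (h2 : ‖l⁻¹‖ ≤ M) (k : ℕ) :
    HasSum (fun n : ℕ => if k ≤ n then bseq l n / ((n:ℂ)+1) else 0)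
      (l * bseq l k) := by
  have hl0 : l ≠ 0 := by
    intro h
    rw [h] at h1; simp at h1; linarith
  set f : ℕ → ℂ := fun n => if k ≤ n then bseq l n / ((n:ℂ)+1) else 0 with hf
  have hS := if_div_summable hσ h1 h2 k
  have ht1 : Tendsto (fun N => ∑ i ∈ Finset.range N, f i) atTop (𝓝 (∑' n, f n)) :=
    hS.hasSum.tendsto_sum_nat
  have hform : ∀ N, ∑ i ∈ Finset.range (k+1+N), f i = l * (bseq l k - bseq l (k+1+N)) := by
    intro N
    induction N with
    | zero =>
      have : ∑ i ∈ Finset.range (k+1), f i = f k := by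
        apply Finset.sum_eq_single k
        · intro b hb hbk
          have : b < k + 1 := Finset.mem_range.1 hb
          have : ¬ k ≤ b := by omega
          exact if_neg this
        · intro hk; exact absurd (Finset.self_mem_range_succ k) hk
      rw [show k+1+0 = k+1 from rfl, this, hf]
      simp only [le_refl, if_pos]
      exact bseq_div hl0 k
    | succ N ih =>
      rw [show k+1+(N+1) = (k+1+N)+1 from rfl, Finset.sum_range_succ, ih]
      have : f (k+1+N) = l * (bseq l (k+1+N) - bseq l (k+1+N+1)) := by
        rw [hf]
        simp only []
        rw [if_pos (by omega : k ≤ k+1+N)]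
        push_cast
        have := bseq_div hl0 (k+1+N)
        push_cast at this
        exact this
      rw [this]
      ring_nf
  have ht2 : Tendsto (fun N => ∑ i ∈ Finset.range (k+1+N), f i) atTop (𝓝 (∑' n, f n)) := by
    apply ht1.comp
    have := tendsto_add_atTop_nat (k+1)
    refine this.congr fun n => by omega
  have ht3 : Tendsto (fun N => l * (bseq l k - bseq l (k+1+N))) atTop
      (𝓝 (l * (bseq l k - 0))) := by
    apply Tendsto.const_mul
    apply Tendsto.const_sub
    have := (bseq_tendsto_zero (by linarith : 0 < σ) h1 h2).comp (tendsto_add_atTop_nat (k+1))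
    refine this.congr fun n => by simp [Nat.add_comm]
  rw [show l * (bseq l k - 0) = l * bseq l k by ring] at ht3
  have : (∑' n, f n) = l * bseq l k :=
    tendsto_nhds_unique ht2 ((ht3.congr (fun N => (hform N).symm)))
  rw [← this]
  exact hS.hasSum

-- differentiability of bseq in l
lemma bseq_differentiableOn {s : Set ℂ} (hs : ∀ l ∈ s, l ≠ (0:ℂ)) (n : ℕ) :
    DifferentiableOn ℂ (fun l => bseq l n) s := by
  induction n with
  | zero =>
    simp only [bseq, Finset.range_zero, Finset.prod_empty]
    exact differentiableOn_const 1
  | succ n ih =>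
    have he : (fun l => bseq l (n+1))
        = fun l => bseq l n * (1 - 1 / (l * ((n:ℂ) + 1))) := by
      funext l; exact bseq_succ l n
    rw [he]
    apply ih.mul
    apply (differentiableOn_const (1:ℂ)).sub
    apply (differentiableOn_const (1:ℂ)).div
    · exact differentiableOn_id.mul_const _
    · intro l hl
      refine mul_ne_zero (hs l hl) ?_
      rw [show ((n:ℂ)+1) = ((n+1:ℕ):ℂ) by push_cast; ring]
      exact_mod_cast Nat.succ_ne_zero n

-- the scalar analytic function
lemma f_differentiableOn (x : lp (fun _ : ℕ => ℂ) 2) :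
    DifferentiableOn ℂ (fun l => ∑' n, conj (x n) * bseq l n) (Metric.ball (1:ℂ) 1) := by
  intro l₀ hl₀
  set t : ℝ := (1 - dist l₀ 1) / 2 with htdef
  have hd := Metric.mem_ball.1 hl₀
  have hd0 : 0 ≤ dist l₀ 1 := dist_nonneg
  have ht : 0 < t := by rw [htdef]; linarith
  have ht1 : t ≤ 1 := by rw [htdef]; linarith
  set s : Set ℂ := Metric.ball (1:ℂ) (1 - t) with hsdef
  have hl₀s : l₀ ∈ s := by
    rw [hsdef, Metric.mem_ball]
    rw [htdef]; linarith
  have hsopen : IsOpen s := Metric.isOpen_ball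
  have hbnd : ∀ l ∈ s, ‖l - 1‖ ≤ 1 - t := by
    intro l hl
    have := Metric.mem_ball.1 hl
    rw [Complex.dist_eq] at this
    linarith
  set σ : ℝ := 1/2 + t/8 with hσdef
  set M : ℝ := 1/t with hMdef
  have hσhalf : 1/2 < σ := by rw [hσdef]; linarith
  have hσ0 : 0 < σ := by rw [hσdef]; linarith
  -- uniform bound
  set u : ℕ → ℝ := fun n =>
    Real.exp (2*M^2) * (‖x n‖^2 + ((n:ℝ)+1) ^ (-(2*σ))) with hudef
  have hu : Summable u := by
    apply Summable.mul_left
    apply Summable.add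
    · have hx2 := (lp.memℓp x).summable (p := 2) (by norm_num)
      have ht2 : (2:ℝ≥0∞).toReal = (2:ℝ) := by norm_num
      rw [ht2] at hx2
      refine hx2.congr fun n => ?_
      rw [show (2:ℝ) = ((2:ℕ):ℝ) by norm_num, Real.rpow_natCast]
    · refine summable_rpow_shift ?_
      rw [hσdef]; linarith
  have hfu : ∀ n l, l ∈ s → ‖conj (x n) * bseq l n‖ ≤ u n := by
    intro n l hl
    obtain ⟨hne, hM, hre⟩ := disc_bounds ht ht1 (hbnd l hl)
    have hb := bseq_abs_le hσ0 hre hM n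
    rw [norm_mul, RCLike.norm_conj]
    set A := ‖x n‖
    set B := ((n:ℝ)+1) ^ (-σ)
    have hB0 : 0 ≤ B := Real.rpow_nonneg (by positivity) _
    have hBB : B^2 = ((n:ℝ)+1) ^ (-(2*σ)) := by
      rw [← Real.rpow_natCast B 2, ← Real.rpow_mul (by positivity)]
      norm_num; ring_nf
    have hE1 : (1:ℝ) ≤ Real.exp (2*M^2) := by
      rw [show (1:ℝ) = Real.exp 0 by simp]
      exact Real.exp_le_exp.2 (by positivity)
    have h5 : ‖bseq l n‖ ≤ Real.exp (2*M^2) * B := by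
      exact hb
    calc A * ‖bseq l n‖ ≤ A * (Real.exp (2*M^2) * B) :=
          mul_le_mul_of_nonneg_left h5 (norm_nonneg _)
      _ = Real.exp (2*M^2) * (A * B) := by ring
      _ ≤ Real.exp (2*M^2) * (A^2 + B^2) := by
          apply mul_le_mul_of_nonneg_left _ (Real.exp_pos _).le
          nlinarith [sq_nonneg (A - B), norm_nonneg (x n)]
      _ = u n := by rw [hudef, hBB]
  have htu : TendstoUniformlyOn
      (fun (T : Finset ℕ) l => ∑ n ∈ T, conj (x n) * bseq l n)
      (fun l => ∑' n, conj (x n) * bseq l n) Filter.atTop s :=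
    tendstoUniformlyOn_tsum hu hfu
  have hdiffs : ∀ T : Finset ℕ,
      DifferentiableOn ℂ (fun l => ∑ n ∈ T, conj (x n) * bseq l n) s := by
    intro T
    apply DifferentiableOn.fun_sum
    intro n _
    exact (bseq_differentiableOn
      (fun l hl => (disc_bounds ht ht1 (hbnd l hl)).1) n).const_mul _
  have hdf : DifferentiableOn ℂ (fun l => ∑' n, conj (x n) * bseq l n) s :=
    htu.tendstoLocallyUniformlyOn.differentiableOn
      (Filter.Eventually.of_forall hdiffs) hsopen
  exact ((hdf.differentiableAt (hsopen.mem_nhds hl₀s)).differentiableWithinAt)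

lemma bseq_inv_nat_zero (m n : ℕ) (h : m < n) : bseq (((m:ℂ)+1)⁻¹) n = 0 := by
  apply Finset.prod_eq_zero (Finset.mem_range.2 h)
  have hne : ((m:ℂ)+1) ≠ 0 := by
    rw [show ((m:ℂ)+1) = ((m+1:ℕ):ℂ) by push_cast; ring]
    exact_mod_cast Nat.succ_ne_zero m
  rw [inv_mul_cancel₀ hne]
  simp

lemma bseq_inv_nat_ne_zero (m : ℕ) : bseq (((m:ℂ)+1)⁻¹) m ≠ 0 := by
  rw [bseq]
  rw [Finset.prod_ne_zero_iff]
  intro j hj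
  have hjm : j < m := Finset.mem_range.1 hj
  have hne : ((m:ℂ)+1) ≠ 0 := by
    rw [show ((m:ℂ)+1) = ((m+1:ℕ):ℂ) by push_cast; ring]
    exact_mod_cast Nat.succ_ne_zero m
  have hne2 : ((j:ℂ)+1) ≠ 0 := by
    rw [show ((j:ℂ)+1) = ((j+1:ℕ):ℂ) by push_cast; ring]
    exact_mod_cast Nat.succ_ne_zero j
  have he : 1 - 1 / (((m:ℂ)+1)⁻¹ * ((j:ℂ)+1)) = 1 - ((m:ℂ)+1)/((j:ℂ)+1) := by
    congr 1
    rw [one_div, mul_inv, inv_inv, div_eq_mul_inv]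
  rw [he]
  intro hzero
  have h2 : ((m:ℂ)+1)/((j:ℂ)+1) = 1 := by linear_combination -hzero
  field_simp at h2
  have h4 : m = j := by
    have h5 : m + 1 = j + 1 := by exact_mod_cast h2
    omega
  omega

lemma inv_nat_mem_ball (m : ℕ) : ((m:ℂ)+1)⁻¹ ∈ Metric.ball (1:ℂ) 1 := by
  rw [Metric.mem_ball, Complex.dist_eq]
  have he : ((m:ℂ)+1)⁻¹ - 1 = (((((m:ℝ)+1)⁻¹ - 1 : ℝ)):ℂ) := by
    push_cast
    ring
  rw [he, Complex.norm_real, Real.norm_eq_abs]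
  have h0 : (0:ℝ) < (m:ℝ)+1 := by positivity
  have h1 : ((m:ℝ)+1)⁻¹ ≤ 1 := by
    rw [inv_le_one_iff₀]; right; linarith
  have h2 : 0 < ((m:ℝ)+1)⁻¹ := by positivity
  rw [abs_of_nonpos (by linarith)]
  linarith

-- Cauchy–Schwarz for finitely many coordinates of an ℓ² element
lemma sum_norm_le_sqrt (a : lp (fun _ : ℕ => ℂ) 2) (n : ℕ) :
    ∑ k ∈ Finset.range (n+1), ‖a k‖ ≤ Real.sqrt ((n:ℝ)+1) * ‖a‖ := by
  have hsq := sq_sum_le_card_mul_sum_sq (s := Finset.range (n+1)) (f := fun k => ‖a k‖)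
  have h2 : ∑ k ∈ Finset.range (n+1), ‖a k‖ ^ 2 ≤ ‖a‖ ^ 2 := by
    have := lp.sum_rpow_le_norm_rpow (p := 2) (by norm_num) a (Finset.range (n+1))
    have ht : (2:ℝ≥0∞).toReal = (2:ℝ) := by norm_num
    rw [ht] at this
    have e : ∀ x : ℝ, 0 ≤ x → x ^ (2:ℝ) = x ^ 2 := fun x hx => by
      rw [show (2:ℝ) = ((2:ℕ):ℝ) by norm_num, Real.rpow_natCast]
    calc ∑ k ∈ Finset.range (n+1), ‖a k‖ ^ 2
        = ∑ k ∈ Finset.range (n+1), ‖a k‖ ^ (2:ℝ) :=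
          Finset.sum_congr rfl fun k _ => (e _ (norm_nonneg _)).symm
      _ ≤ ‖a‖ ^ (2:ℝ) := this
      _ = ‖a‖ ^ 2 := e _ (norm_nonneg _)
  have hcard : (#(Finset.range (n+1)) : ℝ) = (n:ℝ)+1 := by
    rw [Finset.card_range]; push_cast; ring
  have h3 : (∑ k ∈ Finset.range (n+1), ‖a k‖)^2 ≤ ((n:ℝ)+1) * ‖a‖^2 := by
    calc (∑ k ∈ Finset.range (n+1), ‖a k‖)^2
        ≤ (#(Finset.range (n+1)) : ℝ) * ∑ k ∈ Finset.range (n+1), ‖a k‖^2 := by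
          exact_mod_cast hsq
      _ ≤ ((n:ℝ)+1) * ‖a‖^2 := by
          rw [hcard]
          exact mul_le_mul_of_nonneg_left h2 (by positivity)
  have h4 : ∑ k ∈ Finset.range (n+1), ‖a k‖ ≤ Real.sqrt (((n:ℝ)+1) * ‖a‖^2) := by
    refine (Real.le_sqrt (Finset.sum_nonneg fun k _ => norm_nonneg _) (by positivity)).2 h3
  calc ∑ k ∈ Finset.range (n+1), ‖a k‖ ≤ Real.sqrt (((n:ℝ)+1) * ‖a‖^2) := h4
    _ = Real.sqrt ((n:ℝ)+1) * ‖a‖ := by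
        rw [Real.sqrt_mul (by positivity), Real.sqrt_sq (norm_nonneg _)]

local notation "⟪" x ", " y "⟫" => @inner ℂ _ _ x y

lemma adjoint_eigen (C : lp (fun _ : ℕ => ℂ) 2 →L[ℂ] lp (fun _ : ℕ => ℂ) 2)
    (hC : IsCesaro C) {l : ℂ} {σ M : ℝ} (hσ : 1/2 < σ)
    (h1 : σ ≤ (l⁻¹).re) (h2 : ‖l⁻¹‖ ≤ M)
    (bv : lp (fun _ : ℕ => ℂ) 2) (hbv : ∀ n, bv n = bseq l n) :
    ContinuousLinearMap.adjoint C bv = l • bv := by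
  apply ext_inner_right ℂ
  intro a
  rw [ContinuousLinearMap.adjoint_inner_left]
  rw [lp.inner_eq_tsum, lp.inner_eq_tsum]
  simp only [RCLike.inner_apply, lp.coeFn_smul, Pi.smul_apply, smul_eq_mul, hbv]
  -- goal : ∑' n, conj (bseq l n) * (C a) n = ∑' k, conj (l * bseq l k) * a k
  set F : ℕ → ℕ → ℂ := fun n k => if k ≤ n then conj (bseq l n) * a k / ((n:ℂ)+1) else 0
    with hF
  have hE0 : (0:ℝ) < Real.exp (2*M^2) := Real.exp_pos _
  have stepA : ∀ n, conj (bseq l n) * (C a) n = ∑' k, F n k := by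
    intro n
    rw [hC a n]
    rw [tsum_eq_sum (s := Finset.range (n+1))
      (fun k hk => if_neg (fun h => hk (Finset.mem_range.2 (by omega))))]
    have : ∀ k ∈ Finset.range (n+1), F n k = conj (bseq l n) * a k / ((n:ℂ)+1) := by
      intro k hk
      exact if_pos (by have := Finset.mem_range.1 hk; omega)
    rw [Finset.sum_congr rfl this, ← Finset.sum_div, ← Finset.mul_sum]
    push_cast
    ring
  -- norm bounds for rows
  have hrow_norm : ∀ n, ∑' k, ‖F n k‖ ≤
      (Real.exp (2*M^2) * ‖a‖) * ((n:ℝ)+1) ^ (-(σ+1/2)) := by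
    intro n
    have hsupp : ∀ k ∉ Finset.range (n+1), ‖F n k‖ = 0 := by
      intro k hk
      rw [hF]
      simp only []
      rw [if_neg (fun h => hk (Finset.mem_range.2 (by omega))), norm_zero]
    rw [tsum_eq_sum hsupp]
    have hden : ‖((n:ℂ)+1)‖ = (n:ℝ)+1 := by
      rw [show ((n:ℂ)+1) = ((n+1:ℕ):ℂ) by push_cast; ring, Complex.norm_natCast]
      push_cast; ring
    have hterm : ∀ k ∈ Finset.range (n+1),
        ‖F n k‖ = ‖bseq l n‖ / ((n:ℝ)+1) * ‖a k‖ := by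
      intro k hk
      rw [hF]
      simp only []
      rw [if_pos (by have := Finset.mem_range.1 hk; omega)]
      rw [norm_div, norm_mul, hden,
        RCLike.norm_conj]
      ring
    rw [Finset.sum_congr rfl hterm, ← Finset.mul_sum]
    have hb := bseq_abs_le (by linarith : (0:ℝ) < σ) h1 h2 n
    have hCS := sum_norm_le_sqrt a n
    have hpos : (0:ℝ) < (n:ℝ)+1 := by positivity
    have hstep : ‖bseq l n‖ / ((n:ℝ)+1) *
        (∑ k ∈ Finset.range (n+1), ‖a k‖) ≤
        (Real.exp (2*M^2) * ((n:ℝ)+1) ^ (-σ)) / ((n:ℝ)+1) *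
          (Real.sqrt ((n:ℝ)+1) * ‖a‖) := by
      apply mul_le_mul
      · gcongr
      · exact hCS
      · exact Finset.sum_nonneg fun k _ => norm_nonneg _
      · positivity
    refine hstep.trans (le_of_eq ?_)
    rw [Real.sqrt_eq_rpow]
    rw [show -(σ+1/2) = -σ + (1/2 - 1) by ring, Real.rpow_add hpos,
      Real.rpow_sub hpos, Real.rpow_one]
    field_simp
  have hrow_summable : ∀ n, Summable fun k => ‖F n k‖ := by
    intro n
    apply summable_of_ne_finset_zero (s := Finset.range (n+1))
    intro k hk
    rw [hF]
    simp only []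
    rw [if_neg (fun h => hk (Finset.mem_range.2 (by omega))), norm_zero]
  have hFnorm_summable : Summable fun p : ℕ × ℕ => ‖F p.1 p.2‖ := by
    apply (summable_prod_of_nonneg (fun p => norm_nonneg _)).2
    constructor
    · exact hrow_summable
    · apply Summable.of_nonneg_of_le
        (fun n => tsum_nonneg fun k => norm_nonneg _) hrow_norm
      exact (summable_rpow_shift (by linarith : (1:ℝ) < σ + 1/2)).mul_left _
  have hFsummable : Summable (Function.uncurry fun n k => F n k) :=
    Summable.of_norm hFnorm_summable
  have swap := Summable.tsum_comm (f := F) hFsummable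
  -- stepD
  have stepD : ∀ k, ∑' n, F n k = conj (l * bseq l k) * a k := by
    intro k
    have hg : ∀ n, F n k =
        conj (if k ≤ n then bseq l n / ((n:ℂ)+1) else 0) * a k := by
      intro n
      rw [hF]
      by_cases h : k ≤ n
      · simp only [if_pos h]
        rw [map_div₀]
        have : conj ((n:ℂ)+1) = ((n:ℂ)+1) := by
          rw [show ((n:ℂ)+1) = ((n+1:ℕ):ℂ) by push_cast; ring, Complex.conj_natCast]
        rw [this]
        ring
      · simp only [if_neg h, map_zero, zero_mul]
    simp_rw [hg]
    rw [tsum_mul_right]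
    congr 1
    have hstar := (bseq_tail hσ h1 h2 k).star
    have : (∑' n, conj (if k ≤ n then bseq l n / ((n:ℂ)+1) else 0))
        = star (l * bseq l k) := by
      exact hstar.tsum_eq
    rw [this]
    rfl
  conv_lhs => enter [1, i]; rw [mul_comm]
  conv_rhs => enter [1, i]; rw [mul_comm]
  calc ∑' n, conj (bseq l n) * (C a) n = ∑' n, ∑' k, F n k := by
        exact tsum_congr stepA
    _ = ∑' k, ∑' n, F n k := by
        exact (Summable.tsum_comm hFsummable).symm ▸ swap ▸ rfl
    _ = ∑' k, conj (l * bseq l k) * a k := tsum_congr stepD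

-- glocal subspace is a submodule

def glocalSubmodule {X : Type*} [NormedAddCommGroup X] [NormedSpace ℂ X]
    (T : X →L[ℂ] X) (F : Set ℂ) : Submodule ℂ X where
  carrier := glocalSubspace T F
  zero_mem' := ⟨0, differentiableOn_const 0, fun z _ => by simp⟩
  add_mem' := by
    rintro y₁ y₂ ⟨g₁, hg₁, he₁⟩ ⟨g₂, hg₂, he₂⟩
    exact ⟨g₁ + g₂, hg₁.add hg₂, fun z hz => by
      simp only [Pi.add_apply, map_add, smul_add]
      have e1 := he₁ z hz; have e2 := he₂ z hz
      rw [show T (g₁ z) + T (g₂ z) - (z • g₁ z + z • g₂ z)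
        = (T (g₁ z) - z • g₁ z) + (T (g₂ z) - z • g₂ z) from by abel, e1, e2]⟩
  smul_mem' := by
    rintro c y ⟨g, hg, he⟩
    exact ⟨c • g, hg.const_smul c, fun z hz => by
      simp only [Pi.smul_apply, map_smul]
      rw [smul_comm z c (g z), ← smul_sub, he z hz]⟩

-- eigenvector membership
lemma eigen_mem_glocal {X : Type*} [NormedAddCommGroup X] [NormedSpace ℂ X]
    (T : X →L[ℂ] X) (F : Set ℂ) {l : ℂ} (hl : l ∈ F) {y : X}
    (hy : T y = l • y) : y ∈ glocalSubspace T F := by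
  refine ⟨fun z => (l - z)⁻¹ • y, ?_, ?_⟩
  · apply DifferentiableOn.smul_const
    apply DifferentiableOn.inv
    · exact (differentiableOn_const l).sub differentiableOn_id
    · intro z hz
      intro h0
      exact hz (by rwa [sub_eq_zero] at h0 ▸ hl)
  · intro z hz
    have hne : l - z ≠ 0 := by
      intro h0
      rw [sub_eq_zero] at h0
      exact hz (h0 ▸ hl)
    rw [map_smul, hy, smul_smul, smul_smul, ← sub_smul]
    rw [show (l - z)⁻¹ * l - z * (l - z)⁻¹ = (l - z)⁻¹ * (l - z) from by ring]
    rw [inv_mul_cancel₀ hne, one_smul]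

/-- for every nonempty relatively open subset `U` of the closed disc
`{z : |z - 1| ≤ 1}`, the glocal spectral subspace `𝔛_{C*}(Ū)` of the adjoint Cesàro
operator is dense in ℓ². -/
theorem stmt_19 (C : lp (fun _ : ℕ => ℂ) 2 →L[ℂ] lp (fun _ : ℕ => ℂ) 2)
    (hC : IsCesaro C) (U : Set ℂ) (hUne : U.Nonempty)
    (hUopen : ∃ V : Set ℂ, IsOpen V ∧ U = V ∩ {z : ℂ | ‖z - 1‖ ≤ 1}) :
    Dense (glocalSubspace (ContinuousLinearMap.adjoint C) (closure U)) := by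
  obtain ⟨V, hV, hUV⟩ := hUopen
  obtain ⟨z₀, hz₀⟩ := hUne
  have hz₀' : z₀ ∈ V ∩ {z : ℂ | ‖z - 1‖ ≤ 1} := hUV ▸ hz₀
  set D : Set ℂ := Metric.ball (1:ℂ) 1 with hD
  have hz₀cl : z₀ ∈ closure D := by
    rw [hD, closure_ball (1:ℂ) one_ne_zero, Metric.mem_closedBall, Complex.dist_eq]
    exact hz₀'.2
  set W : Set ℂ := V ∩ D with hW
  have hWopen : IsOpen W := hV.inter Metric.isOpen_ball
  have hWne : W.Nonempty := by
    rcases _root_.mem_closure_iff.1 hz₀cl V hV hz₀'.1 with ⟨w, hwV, hwD⟩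
    exact ⟨w, hwV, hwD⟩
  have hWD : W ⊆ D := Set.inter_subset_right
  have hWU : W ⊆ U := by
    rw [hUV]
    rintro w ⟨h1, h2⟩
    refine ⟨h1, ?_⟩
    have := Metric.mem_ball.1 h2
    rw [Complex.dist_eq] at this
    exact le_of_lt this
  -- parameters
  have hball : ∀ l ∈ D, ∃ σ M : ℝ, 1/2 < σ ∧ σ ≤ (l⁻¹).re ∧ ‖l⁻¹‖ ≤ M := by
    intro l hl
    have hd : dist l 1 < 1 := Metric.mem_ball.1 hl
    have hd0 : 0 ≤ dist l 1 := dist_nonneg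
    have habs : ‖l - 1‖ ≤ 1 - (1 - dist l 1) := by
      rw [← Complex.dist_eq]; linarith
    obtain ⟨h0, hM, hre⟩ := disc_bounds (by linarith : 0 < 1 - dist l 1)
      (by linarith) habs
    exact ⟨1/2 + (1 - dist l 1)/8, 1/(1 - dist l 1), by linarith, hre, hM⟩
  choose σf Mf hσf href hMf using hball
  have hmem : ∀ l (hl : l ∈ D), Memℓp (bseq l) 2 :=
    fun l hl => bseq_memℓp (hσf l hl) (href l hl) (hMf l hl)
  -- the eigenvectors
  set bv : (l : ℂ) → l ∈ D → lp (fun _ : ℕ => ℂ) 2 :=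
    fun l hl => ⟨bseq l, hmem l hl⟩ with hbv
  have hbv_apply : ∀ l (hl : l ∈ D) (n : ℕ), (bv l hl) n = bseq l n := fun _ _ _ => rfl
  set K : Submodule ℂ (lp (fun _ : ℕ => ℂ) 2) :=
    Submodule.span ℂ {y | ∃ l, ∃ hl : l ∈ W, y = bv l (hWD hl)} with hK
  have hKsub : (K : Set (lp (fun _ : ℕ => ℂ) 2)) ⊆
      glocalSubspace (ContinuousLinearMap.adjoint C) (closure U) := by
    have hle : K ≤ glocalSubmodule (ContinuousLinearMap.adjoint C) (closure U) := by
      apply Submodule.span_le.2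
      rintro y ⟨l, hl, rfl⟩
      exact eigen_mem_glocal _ _ (subset_closure (hWU hl))
        (adjoint_eigen C hC (hσf l (hWD hl)) (href l (hWD hl)) (hMf l (hWD hl))
          (bv l (hWD hl)) (hbv_apply l (hWD hl)))
    exact hle
  have hKbot : Kᗮ = ⊥ := by
    rw [Submodule.eq_bot_iff]
    intro x hx
    set f : ℂ → ℂ := fun l => ∑' n, conj (x n) * bseq l n with hf
    have hfW : ∀ l ∈ W, f l = 0 := by
      intro l hl
      have hxo : ⟪bv l (hWD hl), x⟫ = 0 :=
        (Submodule.mem_orthogonal K x).1 hx _ (Submodule.subset_span ⟨l, hl, rfl⟩)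
      have hs := (lp.hasSum_inner (𝕜 := ℂ) (bv l (hWD hl)) x).star
      rw [hxo, star_zero] at hs
      have he : (fun n => star (⟪(bv l (hWD hl)) n, x n⟫)) =
          fun n => conj (x n) * bseq l n := by
        funext n
        simp only [RCLike.inner_apply, star_mul', RCLike.star_def, Complex.conj_conj,
          hbv_apply l (hWD hl)]
      rw [he] at hs
      exact hs.tsum_eq
    have hf0 : ∀ l ∈ D, f l = 0 := by
      have han := (f_differentiableOn x).analyticOnNhd Metric.isOpen_ball
      obtain ⟨l₀, hl₀⟩ := hWne
      have heq := han.eqOn_zero_of_preconnected_of_eventuallyEq_zero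
        ((convex_ball (1:ℂ) 1).isPreconnected) (hWD hl₀)
        (Filter.eventually_of_mem (hWopen.mem_nhds hl₀) hfW)
      exact fun l hl => heq hl
    have hcoord : ∀ m : ℕ, x m = 0 := by
      intro m
      induction m using Nat.strong_induction_on with
      | _ m ih =>
        have hfm := hf0 _ (inv_nat_mem_ball m)
        have hts : f (((m:ℂ)+1)⁻¹)
            = ∑ j ∈ Finset.range (m+1), conj (x j) * bseq (((m:ℂ)+1)⁻¹) j := by
          apply tsum_eq_sum
          intro j hj
          have hmj : m < j := by
            rcases Nat.lt_or_ge j (m+1) with hlt | hge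
            · exact absurd (Finset.mem_range.2 hlt) hj
            · omega
          rw [bseq_inv_nat_zero m j hmj]
          ring
        have hsingle : ∑ j ∈ Finset.range (m+1), conj (x j) * bseq (((m:ℂ)+1)⁻¹) j
            = conj (x m) * bseq (((m:ℂ)+1)⁻¹) m := by
          apply Finset.sum_eq_single m
          · intro j hj hjm
            have hjlt : j < m := by
              have := Finset.mem_range.1 hj; omega
            rw [ih j hjlt, map_zero, zero_mul]
          · intro hm; exact absurd (Finset.self_mem_range_succ m) hm
        rw [hts, hsingle] at hfm
        rcases mul_eq_zero.1 hfm with h | h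
        · have := congrArg (starRingEnd ℂ) h
          simpa using this
        · exact absurd h (bseq_inv_nat_ne_zero m)
    have hx0 : (⇑x : ∀ _ : ℕ, ℂ) = ⇑(0 : lp (fun _ : ℕ => ℂ) 2) := by
      funext n
      rw [lp.coeFn_zero]
      exact hcoord n
    exact lp.ext hx0
  have htop : K.topologicalClosure = ⊤ :=
    Submodule.topologicalClosure_eq_top_iff.2 hKbot
  have hdense : Dense (K : Set (lp (fun _ : ℕ => ℂ) 2)) := by
    rw [dense_iff_closure_eq, ← Submodule.topologicalClosure_coe, htop]
    rfl
  exact hdense.mono hKsub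
end
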